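/- Fix ε with 0 < ε < 1/100 and c ≥ 7.36. Then for every δ > 0 there exists an integer N such that for all n ≥ N and all integers m, p with ε^2·n < m ≤ n − c·n/log_2 n and m ≤ p ≤ n − 1, one has R_m(p,n) ≤ δ·(5/8)^n. -/

import Mathlib

open scoped Classical

noncomputable section

/-- The `{±1}`-vector in `ℝ^n` encoded by a Boolean vector. -/
def signVec {n : ℕ} (u : Fin n → Bool) : Fin n → ℝ := fun i => if u i then 1 else -1

/-- `v` is a `{±1}`-vector: all coordinates lie in `{-1, 1}`. -/
def IsPM {n : ℕ} (v : Fin n → ℝ) : Prop := ∀ i, v i = 1 ∨ v i = -1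

/-- The real span of the `{±1}`-vectors encoded by `W` contains a `{±1}`-vector different
from `±(W j)` for all `j`. -/
def KSOEvent {p n : ℕ} (W : Fin p → Fin n → Bool) : Prop :=
  ∃ x : Fin n → ℝ,
    x ∈ Submodule.span ℝ (Set.range fun j => signVec (W j)) ∧ IsPM x ∧
    ∀ j, x ≠ signVec (W j) ∧ x ≠ -signVec (W j)

/-- `ℙ(p, n)`: the probability that the real span of `p` uniformly random `{±1}`-vectors
in `ℝ^n` contains a `{±1}`-vector different from `±v_1, …, ±v_p`. -/
def probKSO (p n : ℕ) : ℝ :=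
  ((Finset.univ.filter fun W : Fin p → Fin n → Bool => KSOEvent W).card : ℝ) / 2 ^ (p * n)

/-- Some three of the vectors encoded by `W` have a real linear combination that is a
`{±1}`-vector different from `±` those three vectors. -/
def P3Event {p n : ℕ} (W : Fin p → Fin n → Bool) : Prop :=
  ∃ j₁ j₂ j₃ : Fin p, j₁ ≠ j₂ ∧ j₁ ≠ j₃ ∧ j₂ ≠ j₃ ∧
    ∃ a b c : ℝ, ∃ x : Fin n → ℝ,
      x = a • signVec (W j₁) + b • signVec (W j₂) + c • signVec (W j₃) ∧ IsPM x ∧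
      (x ≠ signVec (W j₁) ∧ x ≠ -signVec (W j₁)) ∧
      (x ≠ signVec (W j₂) ∧ x ≠ -signVec (W j₂)) ∧
      (x ≠ signVec (W j₃) ∧ x ≠ -signVec (W j₃))

/-- `ℙ₃(p, n)`: the probability of `P3Event` for `p` uniformly random `{±1}`-vectors in `ℝ^n`. -/
def probP3 (p n : ℕ) : ℝ :=
  ((Finset.univ.filter fun W : Fin p → Fin n → Bool => P3Event W).card : ℝ) / 2 ^ (p * n)

/-- Some `m` of the vectors encoded by `W` have a linear combination with all coefficients
nonzero that is a `{±1}`-vector. -/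
def PmEvent (m : ℕ) {p n : ℕ} (W : Fin p → Fin n → Bool) : Prop :=
  ∃ j : Fin m → Fin p, Function.Injective j ∧
    ∃ α : Fin m → ℝ, (∀ i, α i ≠ 0) ∧ IsPM (∑ i, α i • signVec (W (j i)))

/-- `ℙ_m(p, n)`: the probability of `PmEvent m` for `p` uniformly random `{±1}`-vectors
in `ℝ^n`. -/
def probPm (m p n : ℕ) : ℝ :=
  ((Finset.univ.filter fun W : Fin p → Fin n → Bool => PmEvent m W).card : ℝ) / 2 ^ (p * n)

/-- `𝓜_m(p, n)`: the set of `p × n` `{±1}`-matrices (encoded row-wise by Booleans) with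
linearly independent rows, some `m` of which have a linear combination with nonzero
coefficients that is a `{±1}`-vector. -/
def MmSet (m p n : ℕ) : Finset (Fin p → Fin n → Bool) :=
  Finset.univ.filter fun M =>
    (LinearIndependent ℝ fun i => signVec (M i)) ∧ PmEvent m M

/-- `R_m(p, n) = |𝓜_m(p, n)| / 2^(p n)`. -/
def Rm (m p n : ℕ) : ℝ := ((MmSet m p n).card : ℝ) / 2 ^ (p * n)

/-- `ℙ_{p,n}`: the probability that a uniformly random `p × n` `{±1}`-matrix has rank
less than `p`, i.e. its rows are linearly dependent over `ℝ`. -/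
def probSingular (p n : ℕ) : ℝ :=
  ((Finset.univ.filter fun M : Fin p → Fin n → Bool =>
      ¬ LinearIndependent ℝ fun i => signVec (M i)).card : ℝ) / 2 ^ (p * n)

/-- The vector `(1, b_1, …, b_n) ∈ E_n ⊂ ℝ^{n+1}` encoded by a Boolean vector. -/
def eVec {n : ℕ} (u : Fin n → Bool) : Fin (n + 1) → ℝ := Fin.cons 1 (signVec u)

/-- The number of ordered `n`-tuples of distinct, linearly independent vectors from `E_n`
whose real span contains a `{±1}`-vector of `ℝ^{n+1}` different from `±w_1, …, ±w_n`. -/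
def KSOECard (n : ℕ) : ℕ :=
  (Finset.univ.filter fun W : Fin n → (Fin n → Bool) =>
    Function.Injective W ∧ (LinearIndependent ℝ fun i => eVec (W i)) ∧
    ∃ x : Fin (n + 1) → ℝ,
      x ∈ Submodule.span ℝ (Set.range fun i => eVec (W i)) ∧ IsPM x ∧
      ∀ i, x ≠ eVec (W i) ∧ x ≠ -eVec (W i)).card

/-- `P(2, n)`: the number of threshold functions of `n` variables. -/
def numThreshold (n : ℕ) : ℕ :=
  (Finset.univ.filter fun f : (Fin n → Bool) → Bool =>
    ∃ a : ℝ, ∃ w : Fin n → ℝ,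
      ∀ x, f x = true ↔ 0 < a + ∑ i, w i * signVec x i).card

/-! ### Auxiliary development for Statement 9 -/

namespace Stmt9Aux

open Finset

/-- The weighted sum `∑ αᵢ (±1)ᵢ` attached to a Boolean vector. -/
def dotPM {m : ℕ} (α : Fin m → ℝ) (u : Fin m → Bool) : ℝ := ∑ i, α i * signVec u i

lemma sum_signVec_eq {m : ℕ} (β : Fin m → ℝ) (u : Fin m → Bool) :
    dotPM β u = 2 * ∑ i ∈ Finset.univ.filter (fun i => u i = true), β i - ∑ i, β i := by
  unfold dotPM
  have h : ∀ i : Fin m, β i * signVec u i = 2 * (if u i = true then β i else 0) - β i := by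
    intro i; cases hu : u i <;> simp [signVec, hu] <;> ring
  calc ∑ i, β i * signVec u i
      = ∑ i, (2 * (if u i = true then β i else 0) - β i) :=
        Finset.sum_congr rfl fun i _ => h i
    _ = 2 * ∑ i ∈ Finset.univ.filter (fun i => u i = true), β i - ∑ i, β i := by
        rw [Finset.sum_sub_distrib, ← Finset.mul_sum, Finset.sum_filter]

/-- Erdős's form of the Littlewood–Offord bound, positive weights, single target value. -/
lemma card_fiber_le {m : ℕ} (β : Fin m → ℝ) (hβ : ∀ i, 0 < β i) (t : ℝ) :
    (Finset.univ.filter fun u : Fin m → Bool => dotPM β u = t).card ≤ m.choose (m / 2) := by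
  classical
  set f : (Fin m → Bool) → Finset (Fin m) := fun u => Finset.univ.filter (fun i => u i = true)
    with hf
  have hinj : Function.Injective f := by
    intro u v h
    funext i
    have := Finset.ext_iff.1 h i
    simp only [hf, Finset.mem_filter, Finset.mem_univ, true_and] at this
    cases hu : u i <;> cases hv : v i <;> simp_all
  set F := Finset.univ.filter fun u : Fin m → Bool => dotPM β u = t with hF
  have hcard : F.card = (F.image f).card := (Finset.card_image_of_injective _ hinj).symm
  have hanti : IsAntichain (· ⊆ ·) ((F.image f : Finset (Finset (Fin m))) : Set (Finset (Fin m))) := by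
    intro S hS T hT hne hsub
    simp only [Finset.coe_image, Set.mem_image, Finset.mem_coe] at hS hT
    obtain ⟨u, hu, rfl⟩ := hS
    obtain ⟨v, hv, rfl⟩ := hT
    simp only [hF, Finset.mem_filter] at hu hv
    have hsum : ∑ i ∈ f u, β i = ∑ i ∈ f v, β i := by
      have h1 := sum_signVec_eq β u
      have h2 := sum_signVec_eq β v
      rw [hu.2] at h1; rw [hv.2] at h2
      linarith
    have hss : f u ⊂ f v := ⟨hsub, fun h => hne (Finset.Subset.antisymm hsub h)⟩
    obtain ⟨x, hxv, hxu⟩ := Finset.exists_of_ssubset hss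
    have hpos : 0 < ∑ i ∈ f v \ f u, β i :=
      Finset.sum_pos (fun i _ => hβ i) ⟨x, Finset.mem_sdiff.2 ⟨hxv, hxu⟩⟩
    have := Finset.sum_sdiff (hss.1) (f := β)
    nlinarith
  have := IsAntichain.sperner hanti
  simpa [Fintype.card_fin] using hcard.trans_le this

/-- Erdős's Littlewood–Offord bound: two target values, nonzero weights. -/
lemma erdosLO {m : ℕ} (α : Fin m → ℝ) (hα : ∀ i, α i ≠ 0) :
    (Finset.univ.filter fun u : Fin m → Bool => dotPM α u = 1 ∨ dotPM α u = -1).card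
      ≤ 2 * m.choose (m / 2) := by
  classical
  have habs : ∀ t : ℝ,
      (Finset.univ.filter fun u : Fin m → Bool => dotPM α u = t).card
        ≤ m.choose (m / 2) := by
    intro t
    set σ : (Fin m → Bool) → (Fin m → Bool) := fun u j => xor (u j) (decide (α j < 0)) with hσ
    have hσσ : ∀ u, σ (σ u) = u := by
      intro u; funext j; simp [hσ, Bool.xor_assoc]
    have hkey : ∀ u, dotPM (fun i => |α i|) (σ u) = dotPM α u := by
      intro u
      refine Finset.sum_congr rfl fun i _ => ?_
      rcases lt_or_gt_of_ne (hα i) with h | h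
      · cases hu : u i <;>
          simp [hσ, signVec, hu, h, abs_of_neg h] <;> ring
      · cases hu : u i <;>
          simp [hσ, signVec, hu, not_lt.2 h.le, abs_of_pos h]
    have hcard :
        (Finset.univ.filter fun u : Fin m → Bool => dotPM α u = t).card
          = (Finset.univ.filter fun u : Fin m → Bool => dotPM (fun i => |α i|) u = t).card := by
      refine Finset.card_bij' (fun u _ => σ u) (fun u _ => σ u) ?_ ?_ ?_ ?_
      · intro u hu
        simp only [Finset.mem_filter, Finset.mem_univ, true_and] at hu ⊢
        rw [hkey u]; exact hu
      · intro u hu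
        simp only [Finset.mem_filter, Finset.mem_univ, true_and] at hu ⊢
        have h2 := hkey (σ u); rw [hσσ u] at h2; rw [← h2]; exact hu
      · intro u _; exact hσσ u
      · intro u _; exact hσσ u
    rw [hcard]
    exact card_fiber_le _ (fun i => abs_pos.2 (hα i)) t
  calc (Finset.univ.filter fun u : Fin m → Bool => dotPM α u = 1 ∨ dotPM α u = -1).card
      ≤ (Finset.univ.filter fun u : Fin m → Bool => dotPM α u = 1).card
        + (Finset.univ.filter fun u : Fin m → Bool => dotPM α u = (-1 : ℝ)).card := by
        refine le_trans (Finset.card_le_card ?_) (Finset.card_union_le _ _)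
        intro u hu
        simp only [Finset.mem_filter, Finset.mem_univ, true_and, Finset.mem_union] at hu ⊢
        tauto
    _ ≤ m.choose (m / 2) + m.choose (m / 2) := add_le_add (habs 1) (habs (-1))
    _ = 2 * m.choose (m / 2) := (two_mul _).symm

lemma centralBinom_sq_bound : ∀ k : ℕ, (Nat.centralBinom k) ^ 2 * (3 * k + 1) ≤ 16 ^ k := by
  intro k
  induction k with
  | zero => simp [Nat.centralBinom]
  | succ k ih =>
    have hrec := Nat.succ_mul_centralBinom_succ k
    have hsq : (k + 1) ^ 2 * ((Nat.centralBinom (k + 1)) ^ 2)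
        = (2 * (2 * k + 1)) ^ 2 * (Nat.centralBinom k) ^ 2 := by
      calc (k + 1) ^ 2 * ((Nat.centralBinom (k + 1)) ^ 2)
          = ((k + 1) * Nat.centralBinom (k + 1)) ^ 2 := by ring
        _ = (2 * (2 * k + 1) * Nat.centralBinom k) ^ 2 := by rw [hrec]
        _ = (2 * (2 * k + 1)) ^ 2 * (Nat.centralBinom k) ^ 2 := by ring
    have key : (k + 1) ^ 2 * (3 * k + 1) * ((Nat.centralBinom (k + 1)) ^ 2 * (3 * (k + 1) + 1))
        ≤ (k + 1) ^ 2 * (3 * k + 1) * 16 ^ (k + 1) := by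
      have e1 : (k + 1) ^ 2 * (3 * k + 1) * ((Nat.centralBinom (k + 1)) ^ 2 * (3 * (k + 1) + 1))
          = (2 * (2 * k + 1)) ^ 2 * (3 * (k + 1) + 1)
            * ((Nat.centralBinom k) ^ 2 * (3 * k + 1)) := by
        rw [show (k + 1) ^ 2 * (3 * k + 1) * ((Nat.centralBinom (k + 1)) ^ 2 * (3 * (k + 1) + 1))
            = ((k + 1) ^ 2 * ((Nat.centralBinom (k + 1)) ^ 2)) * ((3 * k + 1) * (3 * (k + 1) + 1))
            from by ring, hsq]
        ring
      rw [e1]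
      calc (2 * (2 * k + 1)) ^ 2 * (3 * (k + 1) + 1) * ((Nat.centralBinom k) ^ 2 * (3 * k + 1))
          ≤ (2 * (2 * k + 1)) ^ 2 * (3 * (k + 1) + 1) * 16 ^ k :=
            Nat.mul_le_mul_left _ ih
        _ ≤ (k + 1) ^ 2 * (3 * k + 1) * 16 ^ (k + 1) := by
            rw [pow_succ]
            have hpoly : (2 * (2 * k + 1)) ^ 2 * (3 * (k + 1) + 1)
                ≤ (k + 1) ^ 2 * (3 * k + 1) * 16 := by nlinarith
            calc (2 * (2 * k + 1)) ^ 2 * (3 * (k + 1) + 1) * 16 ^ k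
                ≤ (k + 1) ^ 2 * (3 * k + 1) * 16 * 16 ^ k := Nat.mul_le_mul_right _ hpoly
              _ = (k + 1) ^ 2 * (3 * k + 1) * (16 ^ k * 16) := by ring
    exact Nat.le_of_mul_le_mul_left key (by positivity)

lemma choose_half_sq_bound (m : ℕ) : (m.choose (m / 2)) ^ 2 * (m + 1) ≤ 4 ^ m := by
  rcases Nat.even_or_odd m with ⟨k, hk⟩ | ⟨k, hk⟩
  · subst hk
    have h2 : (k + k) / 2 = k := by omega
    rw [h2]
    have : (k + k).choose k = Nat.centralBinom k := by
      rw [Nat.centralBinom]; congr 1; omega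
    rw [this]
    calc (Nat.centralBinom k) ^ 2 * (k + k + 1)
        ≤ (Nat.centralBinom k) ^ 2 * (3 * k + 1) :=
          Nat.mul_le_mul_left _ (by omega)
      _ ≤ 16 ^ k := centralBinom_sq_bound k
      _ = 4 ^ (k + k) := by rw [show (16:ℕ) = 4 ^ 2 from rfl, ← pow_mul, two_mul]
  · subst hk
    have h2 : (2 * k + 1) / 2 = k := by omega
    rw [h2]
    have hpascal : 2 * ((2 * k + 1).choose k) = Nat.centralBinom (k + 1) := by
      have hsymm : (2 * k + 1).choose (k + 1) = (2 * k + 1).choose k := by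
        rw [← Nat.choose_symm (by omega : k + 1 ≤ 2 * k + 1)]
        congr 1; omega
      have hps : (2 * k + 2).choose (k + 1)
          = (2 * k + 1).choose k + (2 * k + 1).choose (k + 1) :=
        Nat.choose_succ_succ (2 * k + 1) k
      have hdef : Nat.centralBinom (k + 1) = (2 * k + 2).choose (k + 1) := by
        unfold Nat.centralBinom; ring_nf
      rw [hdef, hps, hsymm]; ring
    have hcb := centralBinom_sq_bound (k + 1)
    have hsq : 4 * ((2 * k + 1).choose k) ^ 2 = (Nat.centralBinom (k + 1)) ^ 2 := by
      rw [← hpascal]; ring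
    have : ((2 * k + 1).choose k) ^ 2 * (2 * k + 1 + 1) * 4
        ≤ 16 ^ (k + 1) := by
      calc ((2 * k + 1).choose k) ^ 2 * (2 * k + 1 + 1) * 4
          = (4 * ((2 * k + 1).choose k) ^ 2) * (2 * k + 2) := by ring
        _ = (Nat.centralBinom (k + 1)) ^ 2 * (2 * k + 2) := by rw [hsq]
        _ ≤ (Nat.centralBinom (k + 1)) ^ 2 * (3 * (k + 1) + 1) :=
            Nat.mul_le_mul_left _ (by omega)
        _ ≤ 16 ^ (k + 1) := hcb
    have h16 : 16 ^ (k + 1) = 4 ^ (2 * k + 1) * 4 := by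
      rw [show (16 : ℕ) = 4 ^ 2 from rfl, ← pow_mul, ← pow_succ]
      ring_nf
    rw [h16] at this
    exact Nat.le_of_mul_le_mul_right this (by norm_num)

/-- The `m × m` real matrix whose `k`-th column is the `{±1}`-vector encoded by `C k`. -/
def colMat {m : ℕ} (C : Fin m → Fin m → Bool) : Matrix (Fin m) (Fin m) ℝ :=
  Matrix.of fun i k => signVec (C k) i

/-- The coefficient vector determined by target signs `x` and columns `C`. -/
def alphaOf {m : ℕ} (x : Fin m → Bool) (C : Fin m → Fin m → Bool) : Fin m → ℝ :=
  Matrix.vecMul (signVec x) (colMat C)⁻¹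

/-- The set of admissible columns for a coefficient vector `α`. -/
def goodCols {m : ℕ} (α : Fin m → ℝ) : Finset (Fin m → Bool) :=
  if ∀ i, α i ≠ 0 then
    Finset.univ.filter fun u => dotPM α u = 1 ∨ dotPM α u = -1
  else ∅

lemma goodCols_card {m : ℕ} (α : Fin m → ℝ) :
    (goodCols α).card ≤ 2 * m.choose (m / 2) := by
  unfold goodCols
  split
  · exact erdosLO α ‹_›
  · simp

/-- The cell of `m × n` Boolean matrices (column-indexed) determined by the data
`(T, x, C)`. -/
def cell (m n : ℕ) (T : Finset (Fin n)) (x : Fin m → Bool) (C : Fin m → Fin m → Bool) :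
    Finset (Fin n → Fin m → Bool) :=
  if h : T.card = m then
    Finset.univ.filter fun V =>
      (∀ k, V (T.orderEmbOfFin h k) = C k) ∧ ∀ t ∉ T, V t ∈ goodCols (alphaOf x C)
  else ∅

lemma cell_card {m n : ℕ} (T : Finset (Fin n)) (x : Fin m → Bool) (C : Fin m → Fin m → Bool) :
    (cell m n T x C).card ≤ (2 * m.choose (m / 2)) ^ (n - m) := by
  classical
  unfold cell
  split
  case isFalse => simp
  case isTrue h =>
    set e := T.orderEmbOfFin h with he
    have hTc : (Tᶜ : Finset (Fin n)).card = n - m := by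
      rw [Finset.card_compl, h, Fintype.card_fin]
    calc (Finset.univ.filter fun V : Fin n → Fin m → Bool =>
            (∀ k, V (e k) = C k) ∧ ∀ t ∉ T, V t ∈ goodCols (alphaOf x C)).card
        ≤ (Fintype.piFinset fun _ : ↥(Tᶜ : Finset (Fin n)) => goodCols (alphaOf x C)).card := by
          apply Finset.card_le_card_of_injOn (fun V => fun t : ↥(Tᶜ : Finset (Fin n)) => V ↑t)
          · intro V hV
            simp only [Finset.mem_coe, Finset.mem_filter, Finset.mem_univ, true_and] at hV
            rw [Finset.mem_coe, Fintype.mem_piFinset]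
            intro t
            exact hV.2 ↑t (Finset.mem_compl.1 t.2)
          · intro V₁ hV₁ V₂ hV₂ himg
            simp only [Finset.coe_filter, Set.mem_setOf_eq] at hV₁ hV₂
            funext t
            by_cases ht : t ∈ T
            · have : t ∈ Set.range e := by
                rw [he, Finset.range_orderEmbOfFin]; exact ht
              obtain ⟨k, rfl⟩ := this
              rw [hV₁.2.1 k, hV₂.2.1 k]
            · exact congrFun himg ⟨t, Finset.mem_compl.2 ht⟩
      _ ≤ (2 * m.choose (m / 2)) ^ (n - m) := by
          rw [Fintype.card_piFinset]
          rw [Finset.prod_const, Finset.card_univ]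
          rw [Fintype.card_coe, hTc]
          exact Nat.pow_le_pow_left (goodCols_card _) _

/-- The set of "bad" `m × n` Boolean matrices (stored column-wise): there is a coefficient
vector with all entries nonzero whose weighted row-sum is a `{±1}`-vector, and an invertible
`m × m` minor. -/
def Bad (m n : ℕ) : Finset (Fin n → Fin m → Bool) :=
  Finset.univ.filter fun V =>
    ∃ α : Fin m → ℝ, (∀ i, α i ≠ 0) ∧ (∀ t, dotPM α (V t) = 1 ∨ dotPM α (V t) = -1) ∧
      ∃ T : Finset (Fin n), ∃ h : T.card = m,
        IsUnit (colMat fun k => V (T.orderEmbOfFin h k))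

lemma bad_card (m n : ℕ) :
    (Bad m n).card ≤ n.choose m * (2 ^ m * (2 ^ m) ^ m) * (2 * m.choose (m / 2)) ^ (n - m) := by
  classical
  set I : Finset ((Finset (Fin n)) × (Fin m → Bool) × (Fin m → Fin m → Bool)) :=
    (Finset.univ.powersetCard m) ×ˢ ((Finset.univ : Finset (Fin m → Bool)) ×ˢ
      (Finset.univ : Finset (Fin m → Fin m → Bool))) with hI
  have hsub : Bad m n ⊆ I.biUnion fun z => cell m n z.1 z.2.1 z.2.2 := by
    intro V hV
    simp only [Bad, Finset.mem_filter, Finset.mem_univ, true_and] at hV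
    obtain ⟨α, hα, hdot, T, hT, hU⟩ := hV
    set e := T.orderEmbOfFin hT with he
    set C : Fin m → Fin m → Bool := fun k => V (e k) with hC
    set x : Fin m → Bool := fun k => decide (dotPM α (V (e k)) = 1) with hx
    have hxval : ∀ k, signVec x k = dotPM α (C k) := by
      intro k
      rcases hdot (e k) with h1 | h1
      · have hxk : x k = true := by simp [hx, h1]
        rw [hC]
        simp only [signVec, hxk, if_true]
        exact h1.symm
      · have hxk : x k = false := by
          rw [hx]
          simp only [h1, decide_eq_false_iff_not]
          norm_num
        rw [hC]
        simp only [signVec, hxk, if_false, Bool.false_eq_true]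
        exact h1.symm
    have hMx : Matrix.vecMul α (colMat C) = signVec x := by
      funext k
      rw [hxval k]
      simp [Matrix.vecMul, dotProduct, colMat, dotPM]
    have hαdef : alphaOf x C = α := by
      unfold alphaOf
      rw [← hMx, Matrix.vecMul_vecMul,
        Matrix.mul_nonsing_inv _ ((Matrix.isUnit_iff_isUnit_det _).1 hU), Matrix.vecMul_one]
    refine Finset.mem_biUnion.2 ⟨⟨T, x, C⟩, ?_, ?_⟩
    · simp [hI, Finset.mem_powersetCard_univ, hT]
    · unfold cell
      rw [dif_pos hT]
      simp only [Finset.mem_filter, Finset.mem_univ, true_and]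
      refine ⟨?_, fun t ht => ?_⟩
      · first
        | exact fun k => rfl
        | exact fun k => trivial
        | trivial
      rw [hαdef]
      unfold goodCols
      rw [if_pos hα]
      simp only [Finset.mem_filter, Finset.mem_univ, true_and]
      exact hdot t
  calc (Bad m n).card ≤ (I.biUnion fun z => cell m n z.1 z.2.1 z.2.2).card :=
        Finset.card_le_card hsub
    _ ≤ ∑ z ∈ I, (cell m n z.1 z.2.1 z.2.2).card := Finset.card_biUnion_le
    _ ≤ I.card * (2 * m.choose (m / 2)) ^ (n - m) := by
        rw [← smul_eq_mul]
        exact Finset.sum_le_card_nsmul _ _ _ fun z _ => cell_card _ _ _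
    _ = n.choose m * (2 ^ m * (2 ^ m) ^ m) * (2 * m.choose (m / 2)) ^ (n - m) := by
        congr 1
        rw [hI, Finset.card_product, Finset.card_product]
        simp only [Finset.card_powersetCard, Finset.card_univ, Fintype.card_fin,
          Fintype.card_fun, Fintype.card_bool]
        try ring

lemma exists_unit_submatrix {m n : ℕ} (V : Fin n → Fin m → Bool)
    (h : LinearIndependent ℝ fun i : Fin m => fun t : Fin n => signVec (V t) i) :
    ∃ T : Finset (Fin n), ∃ hT : T.card = m,
      IsUnit (colMat fun k => V (T.orderEmbOfFin hT k)) := by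
  classical
  set col : Fin n → (Fin m → ℝ) := fun t => signVec (V t) with hcol
  set A : Matrix (Fin m) (Fin n) ℝ := Matrix.of fun i t => col t i with hA
  let AT := Matrix.transpose A
  have hrows : LinearIndependent ℝ (fun i : Fin m => A i) := h
  have hker : ∀ c : Fin m → ℝ, Matrix.mulVec (Matrix.transpose A) c = 0 → c = 0 := by
    intro c hc
    have hsum : ∑ i, c i • A i = 0 := by
      funext t
      have := congrFun hc t
      simp only [Matrix.mulVec, dotProduct, Matrix.transpose_apply, Pi.zero_apply] at this
      simp only [Finset.sum_apply, Pi.smul_apply, smul_eq_mul, Pi.zero_apply]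
      rw [← this]
      exact Finset.sum_congr rfl fun i _ => mul_comm _ _
    have := Fintype.linearIndependent_iff.1 hrows c hsum
    funext i; exact this i
  have hinj : Function.Injective (Matrix.transpose A).mulVecLin := by
    rw [← LinearMap.ker_eq_bot, LinearMap.ker_eq_bot']
    intro c hc
    exact hker c hc
  have hrankT : (Matrix.transpose A).rank = m := by
    rw [Matrix.rank, LinearMap.finrank_range_of_inj hinj,
      Module.finrank_fintype_fun_eq_card, Fintype.card_fin]
  have hrankA : A.rank = m := by rw [← Matrix.rank_transpose]; exact hrankT
  have hspan : Submodule.span ℝ (Set.range col) = ⊤ := by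
    apply Submodule.eq_top_of_finrank_eq
    have hr : A.rank = m := hrankA
    rw [Matrix.rank, Matrix.range_mulVecLin] at hr
    rw [show Set.range A.col = Set.range col from rfl] at hr
    rw [hr, Module.finrank_fintype_fun_eq_card, Fintype.card_fin]
  obtain ⟨s, hsub, hspan2, hli⟩ := exists_linearIndependent ℝ (Set.range col)
  rw [hspan] at hspan2
  have hfin : s.Finite := (Set.finite_range col).subset hsub
  haveI := hfin.fintype
  have hbasis : Module.Basis s ℝ (Fin m → ℝ) :=
    Module.Basis.mk hli (by rw [Subtype.range_coe]; exact le_of_eq hspan2.symm)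
  have hcards : Fintype.card s = m := by
    rw [← Module.finrank_eq_card_basis hbasis, Module.finrank_fintype_fun_eq_card,
      Fintype.card_fin]
  have hch : ∀ v : s, ∃ t : Fin n, col t = ↑v := fun v => hsub v.2
  choose f hf using hch
  have hfinj : Function.Injective f := by
    intro v w hvw
    apply Subtype.ext
    rw [← hf v, ← hf w, hvw]
  set T : Finset (Fin n) := Finset.univ.image f with hTdef
  have hT : T.card = m := by
    rw [hTdef, Finset.card_image_of_injective _ hfinj, Finset.card_univ, hcards]
  refine ⟨T, hT, ?_⟩
  rw [← Matrix.linearIndependent_cols_iff_isUnit]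
  set e := T.orderEmbOfFin hT with he
  have hmem : ∀ k, col (e k) ∈ s := by
    intro k
    have hek : e k ∈ T := Finset.orderEmbOfFin_mem T hT k
    rw [hTdef] at hek
    obtain ⟨v, -, hv⟩ := Finset.mem_image.1 hek
    rw [← hv, hf]
    exact v.2
  set g : Fin m → s := fun k => ⟨col (e k), hmem k⟩ with hg
  have hek : ∀ k, e k = f (g k) := by
    intro k
    have hekT : e k ∈ T := Finset.orderEmbOfFin_mem T hT k
    rw [hTdef] at hekT
    obtain ⟨v, -, hv⟩ := Finset.mem_image.1 hekT
    have hveq : v = g k := Subtype.ext (by rw [← hf v, hv])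
    rw [← hv, hveq]
  have hginj : Function.Injective g := by
    intro k₁ k₂ hk
    apply (T.orderEmbOfFin hT).injective
    rw [show T.orderEmbOfFin hT k₁ = e k₁ from rfl, show T.orderEmbOfFin hT k₂ = e k₂ from rfl,
      hek k₁, hek k₂, hk]
  have hli2 : LinearIndependent ℝ (fun k => col (e k)) := hli.comp g hginj
  exact hli2

lemma choose_le_two_pow (a b : ℕ) : a.choose b ≤ 2 ^ a := by
  calc a.choose b ≤ ∑ i ∈ Finset.range (a + 1), a.choose i := by
        by_cases hb : b ≤ a
        · exact Finset.single_le_sum (fun i _ => Nat.zero_le _) (Finset.mem_range.2 (by omega))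
        · rw [Nat.choose_eq_zero_of_lt (by omega)]
          exact Nat.zero_le _
    _ = 2 ^ a := Nat.sum_range_choose a

lemma mmset_card_le (m p n : ℕ) :
    (MmSet m p n).card ≤ p.choose m * ((Bad m n).card * (2 ^ n) ^ (p - m)) := by
  classical
  have hsub : MmSet m p n ⊆ (Finset.univ.powersetCard m).biUnion
      (fun S => Finset.univ.filter fun W : Fin p → Fin n → Bool =>
        ∃ hS : S.card = m, (fun t k => W (S.orderEmbOfFin hS k) t) ∈ Bad m n) := by
    intro W hW
    simp only [MmSet, Finset.mem_filter, Finset.mem_univ, true_and] at hW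
    obtain ⟨hli, j, hjinj, α, hα, hpm⟩ := hW
    set S : Finset (Fin p) := Finset.univ.image j with hS
    have hScard : S.card = m := by
      rw [hS, Finset.card_image_of_injective _ hjinj, Finset.card_univ, Fintype.card_fin]
    refine Finset.mem_biUnion.2 ⟨S, Finset.mem_powersetCard_univ.2 hScard, ?_⟩
    simp only [Finset.mem_filter, Finset.mem_univ, true_and]
    refine ⟨hScard, ?_⟩
    set e := S.orderEmbOfFin hScard with he
    have hcover : ∀ k, ∃ i, j i = e k := by
      intro k
      have hekS : e k ∈ S := Finset.orderEmbOfFin_mem S hScard k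
      rw [hS] at hekS
      obtain ⟨i, -, hi⟩ := Finset.mem_image.1 hekS
      exact ⟨i, hi⟩
    choose σ hσ using hcover
    have hσinj : Function.Injective σ := by
      intro k₁ k₂ hk
      apply (S.orderEmbOfFin hScard).injective
      rw [show S.orderEmbOfFin hScard k₁ = e k₁ from rfl,
        show S.orderEmbOfFin hScard k₂ = e k₂ from rfl, ← hσ k₁, ← hσ k₂, hk]
    have hσbij : Function.Bijective σ := Finite.injective_iff_bijective.1 hσinj
    simp only [Bad, Finset.mem_filter, Finset.mem_univ, true_and]
    refine ⟨fun k => α (σ k), fun k => hα _, ?_, ?_⟩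
    · intro t
      have hsum : dotPM (fun k => α (σ k)) (fun k => W (e k) t)
          = (∑ i, α i • signVec (W (j i))) t := by
        rw [Finset.sum_apply]
        unfold dotPM
        refine Fintype.sum_bijective σ hσbij _ _ fun k => ?_
        simp only [Pi.smul_apply, smul_eq_mul, hσ k]
        simp [signVec]
      rw [show dotPM (fun k => α (σ k)) ((fun t k => W (e k) t) t)
          = dotPM (fun k => α (σ k)) (fun k => W (e k) t) from rfl, hsum]
      exact hpm t
    · apply exists_unit_submatrix (V := fun t k => W (e k) t)
      have hli2 : LinearIndependent ℝ (fun k : Fin m => signVec (W (e k))) :=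
        hli.comp e (S.orderEmbOfFin hScard).injective
      exact hli2
  calc (MmSet m p n).card
      ≤ ∑ S ∈ Finset.univ.powersetCard m,
          (Finset.univ.filter fun W : Fin p → Fin n → Bool =>
            ∃ hS : S.card = m, (fun t k => W (S.orderEmbOfFin hS k) t) ∈ Bad m n).card :=
        (Finset.card_le_card hsub).trans Finset.card_biUnion_le
    _ ≤ p.choose m * ((Bad m n).card * (2 ^ n) ^ (p - m)) := by
        rw [show p.choose m * ((Bad m n).card * (2 ^ n) ^ (p - m))
            = (Finset.univ.powersetCard m : Finset (Finset (Fin p))).card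
              * ((Bad m n).card * (2 ^ n) ^ (p - m)) from by
          rw [Finset.card_powersetCard, Finset.card_univ, Fintype.card_fin]]
        rw [← smul_eq_mul]
        apply Finset.sum_le_card_nsmul
        intro S hSmem
        have hScard : S.card = m := Finset.mem_powersetCard_univ.1 hSmem
        set e := S.orderEmbOfFin hScard with he
        have hcompl : Fintype.card ↥(Sᶜ : Finset (Fin p)) = p - m := by
          rw [Fintype.card_coe, Finset.card_compl, hScard, Fintype.card_fin]
        calc (Finset.univ.filter fun W : Fin p → Fin n → Bool =>
                ∃ hS : S.card = m, (fun t k => W (S.orderEmbOfFin hS k) t) ∈ Bad m n).card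
            ≤ ((Bad m n) ×ˢ (Finset.univ : Finset (↥(Sᶜ : Finset (Fin p)) → Fin n → Bool))).card := by
              apply Finset.card_le_card_of_injOn
                (fun W => ((fun t k => W (e k) t), fun i : ↥(Sᶜ : Finset (Fin p)) => W ↑i))
              · intro W hW
                simp only [Finset.mem_coe, Finset.mem_filter, Finset.mem_univ, true_and] at hW
                obtain ⟨hS', hbad⟩ := hW
                rw [Finset.mem_coe, Finset.mem_product]
                exact ⟨hbad, Finset.mem_univ _⟩
              · intro W₁ hW₁ W₂ hW₂ himg
                have h1 := congrArg Prod.fst himg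
                have h2 := congrArg Prod.snd himg
                simp only at h1 h2
                funext i t
                by_cases hi : i ∈ S
                · have : i ∈ Set.range e := by
                    rw [he, Finset.range_orderEmbOfFin]; exact hi
                  obtain ⟨k, rfl⟩ := this
                  exact congrFun (congrFun h1 t) k
                · exact congrFun (congrFun h2 ⟨i, Finset.mem_compl.2 hi⟩) t
          _ = (Bad m n).card * (2 ^ n) ^ (p - m) := by
              rw [Finset.card_product, Finset.card_univ]
              congr 1
              rw [show (2 ^ n) ^ (p - m) = (2 ^ n) ^ Fintype.card ↥(Sᶜ : Finset (Fin p)) from by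
                rw [hcompl]]
              simp [Fintype.card_fun, Fintype.card_bool, Fintype.card_fin]

lemma D_sqrt_le (m : ℕ) :
    (2 * m.choose (m / 2) : ℝ) * Real.sqrt (m + 1) ≤ 2 ^ (m + 1) := by
  have h1 : ((2 * m.choose (m / 2) : ℝ) * Real.sqrt (m + 1)) ^ 2 ≤ ((2 : ℝ) ^ (m + 1)) ^ 2 := by
    have hsq : (Real.sqrt ((m : ℝ) + 1)) ^ 2 = (m : ℝ) + 1 :=
      Real.sq_sqrt (by positivity)
    have hnat := choose_half_sq_bound m
    have hcast : ((m.choose (m / 2) : ℝ)) ^ 2 * ((m : ℝ) + 1) ≤ (4 : ℝ) ^ m := by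
      have := (Nat.cast_le (α := ℝ)).2 hnat
      push_cast at this
      convert this using 2 <;> push_cast <;> ring
    calc ((2 * m.choose (m / 2) : ℝ) * Real.sqrt (m + 1)) ^ 2
        = 4 * (((m.choose (m / 2) : ℝ)) ^ 2 * ((m : ℝ) + 1)) := by
          rw [mul_pow, mul_pow, hsq]; ring
      _ ≤ 4 * (4 : ℝ) ^ m := by linarith
      _ = ((2 : ℝ) ^ (m + 1)) ^ 2 := by
          rw [show (4 : ℝ) = 2 ^ 2 from by norm_num, ← pow_mul, ← pow_mul, ← pow_add]
          congr 1
          ring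
  have h2 : (0 : ℝ) ≤ (2 * m.choose (m / 2) : ℝ) * Real.sqrt (m + 1) := by positivity
  nlinarith [h1, h2, pow_pos (show (0:ℝ) < 2 from by norm_num) (m + 1)]

lemma rm_le (m p n : ℕ) (hmp : m ≤ p) (hpn : p ≤ n) :
    Rm m p n ≤ 2 ^ (3 * n) / Real.sqrt (m + 1) ^ (n - m) := by
  have hmn : m ≤ n := hmp.trans hpn
  obtain ⟨q, hq⟩ : ∃ q, n = m + q := ⟨n - m, by omega⟩
  obtain ⟨r, hr⟩ : ∃ r, p = m + r := ⟨p - m, by omega⟩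
  have hqnm : n - m = q := by omega
  have hrpm : p - m = r := by omega
  set X : ℝ := Real.sqrt (m + 1) ^ (n - m) with hX
  have hXpos : 0 < X := by
    apply pow_pos
    have : (0 : ℝ) < (m : ℝ) + 1 := by positivity
    exact Real.sqrt_pos.2 this
  -- the counting bound, cast to ℝ
  have hcount : ((MmSet m p n).card : ℝ)
      ≤ 2 ^ n * (2 ^ n * (2 ^ m * (2 ^ m) ^ m) * ((2 * m.choose (m / 2) : ℕ) : ℝ) ^ (n - m)
          * (2 ^ n) ^ (p - m)) := by
    have h1 := mmset_card_le m p n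
    have h2 := bad_card m n
    have h3 : (MmSet m p n).card
        ≤ p.choose m * ((n.choose m * (2 ^ m * (2 ^ m) ^ m)
              * (2 * m.choose (m / 2)) ^ (n - m)) * (2 ^ n) ^ (p - m)) :=
      h1.trans (Nat.mul_le_mul_left _ (Nat.mul_le_mul_right _ h2))
    have h4 : (MmSet m p n).card
        ≤ 2 ^ n * ((2 ^ n * (2 ^ m * (2 ^ m) ^ m)
              * (2 * m.choose (m / 2)) ^ (n - m)) * (2 ^ n) ^ (p - m)) := by
      refine h3.trans ?_
      have hc1 : p.choose m ≤ 2 ^ n := (choose_le_two_pow p m).trans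
        (Nat.pow_le_pow_right (by norm_num) hpn)
      have hc2 : n.choose m ≤ 2 ^ n := choose_le_two_pow n m
      exact Nat.mul_le_mul hc1 (Nat.mul_le_mul_right _
        (Nat.mul_le_mul_right _ (Nat.mul_le_mul_right _ hc2)))
    calc ((MmSet m p n).card : ℝ)
        ≤ ((2 ^ n * ((2 ^ n * (2 ^ m * (2 ^ m) ^ m)
              * (2 * m.choose (m / 2)) ^ (n - m)) * (2 ^ n) ^ (p - m)) : ℕ) : ℝ) := by
          exact_mod_cast h4
      _ = 2 ^ n * (2 ^ n * (2 ^ m * (2 ^ m) ^ m)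
            * ((2 * m.choose (m / 2) : ℕ) : ℝ) ^ (n - m) * (2 ^ n) ^ (p - m)) := by
          push_cast
          ring
  -- multiply through by X
  have hDX : ((2 * m.choose (m / 2) : ℕ) : ℝ) ^ (n - m) * X ≤ (2 ^ (m + 1) : ℝ) ^ (n - m) := by
    rw [hX, ← mul_pow]
    apply pow_le_pow_left₀ (by positivity)
    have := D_sqrt_le m
    push_cast
    push_cast at this
    exact this
  have hkey : ((MmSet m p n).card : ℝ) * X ≤ 2 ^ (3 * n) * 2 ^ (p * n) := by
    calc ((MmSet m p n).card : ℝ) * X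
        ≤ (2 ^ n * (2 ^ n * (2 ^ m * (2 ^ m) ^ m)
            * ((2 * m.choose (m / 2) : ℕ) : ℝ) ^ (n - m) * (2 ^ n) ^ (p - m))) * X := by
          exact mul_le_mul_of_nonneg_right hcount hXpos.le
      _ = (2 ^ n * (2 ^ n * (2 ^ m * (2 ^ m) ^ m)) * (2 ^ n) ^ (p - m))
            * (((2 * m.choose (m / 2) : ℕ) : ℝ) ^ (n - m) * X) := by ring
      _ ≤ (2 ^ n * (2 ^ n * (2 ^ m * (2 ^ m) ^ m)) * (2 ^ n) ^ (p - m))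
            * ((2 ^ (m + 1) : ℝ) ^ (n - m)) := by
          refine mul_le_mul_of_nonneg_left hDX (by positivity)
      _ = 2 ^ (n + n + (m + m * m) + n * (p - m) + (m + 1) * (n - m)) := by
          simp only [pow_add, pow_mul]
          ring
      _ = 2 ^ (3 * n) * 2 ^ (p * n) := by
          rw [← pow_add]
          congr 1
          rw [hqnm, hrpm]
          subst hq hr
          ring
  have h2pn : (0 : ℝ) < 2 ^ (p * n) := by positivity
  rw [Rm, div_le_div_iff₀ h2pn (by positivity : (0:ℝ) < X)]
  calc ((MmSet m p n).card : ℝ) * X ≤ 2 ^ (3 * n) * 2 ^ (p * n) := hkey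
    _ = 2 ^ (3 * n) * 2 ^ (p * n) := rfl

lemma log5_gt : (2.32 : ℝ) * Real.log 2 < Real.log 5 := by
  have h : (2 : ℝ) ^ (58 : ℕ) < 5 ^ (25 : ℕ) := by norm_num
  have h2 := Real.log_lt_log (by positivity) h
  rw [Real.log_pow, Real.log_pow] at h2
  push_cast at h2
  linarith

set_option maxHeartbeats 1000000 in
lemma final_ineq (ε c δ : ℝ) (hε0 : 0 < ε) (hε : ε < 1 / 100) (hc : 7.36 ≤ c) (hδ : 0 < δ) :
    ∃ N : ℕ, ∀ n, N ≤ n → ∀ m : ℕ, ε ^ 2 * n < (m : ℝ) →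
      (m : ℝ) ≤ (n : ℝ) - c * n / Real.logb 2 n → m ≤ n →
      (2 : ℝ) ^ (3 * n) ≤ δ * (5 / 8) ^ n * Real.sqrt ((m : ℝ) + 1) ^ (n - m) := by
  have hlog2 : 0 < Real.log 2 := Real.log_pos (by norm_num)
  set K : ℝ := -(2 * Real.log ε) with hK
  have hKpos : 0 < K := by
    have : Real.log ε < 0 := Real.log_neg hε0 (by linarith)
    rw [hK]; linarith
  set A : ℝ := 3.68 * Real.log 2 with hA
  have hApos : 0 < A := by rw [hA]; positivity
  set B : ℝ := 6 * Real.log 2 - Real.log 5 with hB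
  set γ : ℝ := Real.log 5 - 2.32 * Real.log 2 with hγ
  have hγpos : 0 < γ := by
    have := log5_gt
    rw [hγ]; linarith
  have hAB : A = B + γ := by rw [hA, hB, hγ]; ring_nf
  set N₀ : ℝ := max (Real.exp (2 * K)) (max (Real.exp (2 * A * K / γ)) (2 * Real.log δ⁻¹ / γ))
    with hN₀
  refine ⟨max 2 (Nat.ceil N₀ + 1), ?_⟩
  intro n hn m hm1 hm2 hmn
  have hn2 : 2 ≤ n := le_trans (le_max_left _ _) hn
  have hnR : (2 : ℝ) ≤ (n : ℝ) := by exact_mod_cast hn2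
  have hnN₀ : N₀ ≤ (n : ℝ) := by
    have h1 : (Nat.ceil N₀ + 1 : ℕ) ≤ n := le_trans (le_max_right _ _) hn
    have h2 : N₀ ≤ (Nat.ceil N₀ : ℝ) := Nat.le_ceil _
    have h3 : ((Nat.ceil N₀ : ℕ) : ℝ) ≤ (n : ℝ) := by
      exact_mod_cast Nat.le_of_succ_le h1
    linarith
  set L : ℝ := Real.log n with hL
  have hLpos : 0 < L := by
    rw [hL]; exact Real.log_pos (by linarith)
  have hL1 : 2 * K ≤ L := by
    have h1 : Real.exp (2 * K) ≤ (n : ℝ) := le_trans (le_max_left _ _) hnN₀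
    have h2 := Real.log_le_log (Real.exp_pos _) h1
    rwa [Real.log_exp] at h2
  have hL2 : 2 * A * K / γ ≤ L := by
    have h1 : Real.exp (2 * A * K / γ) ≤ (n : ℝ) :=
      le_trans (le_trans (le_max_left _ _) (le_max_right _ _)) hnN₀
    have h2 := Real.log_le_log (Real.exp_pos _) h1
    rwa [Real.log_exp] at h2
  have hδn : 2 * Real.log δ⁻¹ / γ ≤ (n : ℝ) :=
    le_trans (le_trans (le_max_right _ _) (le_max_right _ _)) hnN₀
  clear_value K A B γ N₀ L
  have hq : c * n * Real.log 2 / L ≤ ((n - m : ℕ) : ℝ) := by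
    have hcast : ((n - m : ℕ) : ℝ) = (n : ℝ) - (m : ℝ) := by
      push_cast [hmn]; ring
    rw [hcast]
    have hlogb : Real.logb 2 (n : ℝ) = L / Real.log 2 := by rw [Real.logb, hL]
    have h0 : c * n / Real.logb 2 (n : ℝ) = c * n * Real.log 2 / L := by
      rw [hlogb]; field_simp
    have := hm2
    rw [h0] at this
    linarith
  have hlogm : L - K ≤ Real.log ((m : ℝ) + 1) := by
    have hpos : (0 : ℝ) < ε ^ 2 * n := by positivity
    have hle : ε ^ 2 * n ≤ (m : ℝ) + 1 := by linarith
    have h1 : Real.log (ε ^ 2 * n) ≤ Real.log ((m : ℝ) + 1) := Real.log_le_log hpos hle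
    have h2 : Real.log (ε ^ 2 * n) = 2 * Real.log ε + L := by
      rw [Real.log_mul (by positivity) (by positivity), Real.log_pow, hL]
      push_cast; ring
    rw [h2] at h1
    rw [hK]
    linarith
  have hLK : 0 ≤ L - K := by linarith
  have hstep1 : c * n * Real.log 2 / L * (L - K) ≤ ((n - m : ℕ) : ℝ) * Real.log ((m : ℝ) + 1) :=
    mul_le_mul hq hlogm hLK (by positivity)
  have hstep2 : c * n * Real.log 2 / L * (L - K) = c * Real.log 2 * n * (1 - K / L) := by
    have hL0 : L ≠ 0 := ne_of_gt hLpos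
    have h : (1 : ℝ) - K / L = (L - K) / L := by
      rw [sub_div, div_self hL0]
    rw [h]
    ring
  have h1mKL : 0 ≤ 1 - K / L := by
    have : K / L ≤ 1 / 2 := by
      rw [div_le_iff₀ hLpos]; linarith
    linarith
  have hstep3 : 2 * A * (n : ℝ) * (1 - K / L) ≤ c * Real.log 2 * n * (1 - K / L) := by
    apply mul_le_mul_of_nonneg_right _ h1mKL
    have h2A : 2 * A = 7.36 * Real.log 2 := by rw [hA]; ring_nf
    rw [h2A]
    have hn0 : (0 : ℝ) ≤ (n : ℝ) := by positivity
    exact mul_le_mul_of_nonneg_right (mul_le_mul_of_nonneg_right hc hlog2.le) hn0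
  have hstep4 : 2 * A * (n : ℝ) * (K / L) ≤ (n : ℝ) * γ := by
    have h01 : 2 * A * K ≤ L * γ := by
      rw [div_le_iff₀ hγpos] at hL2
      linarith
    have h02 : 2 * A * (K / L) ≤ γ := by
      rw [show 2 * A * (K / L) = 2 * A * K / L from by ring, div_le_iff₀ hLpos]
      exact h01.trans_eq (mul_comm L γ)
    calc 2 * A * (n : ℝ) * (K / L) = (n : ℝ) * (2 * A * (K / L)) := by ring
      _ ≤ (n : ℝ) * γ := mul_le_mul_of_nonneg_left h02 (by positivity)
  have hδγ : 2 * Real.log δ⁻¹ ≤ (n : ℝ) * γ := by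
    rw [div_le_iff₀ hγpos] at hδn
    linarith
  have hstep12 : c * Real.log 2 * n * (1 - K / L) ≤ ((n - m : ℕ) : ℝ) * Real.log ((m : ℝ) + 1) := by
    rw [← hstep2]; exact hstep1
  have e1 : 2 * A * (n : ℝ) * (1 - K / L) = 2 * A * n - 2 * A * n * (K / L) := by ring
  have e2 : 2 * A * (n : ℝ) = 2 * n * B + 2 * n * γ := by rw [hAB]; ring
  have t1 : 2 * A * (n : ℝ) - (n : ℝ) * γ ≤ ((n - m : ℕ) : ℝ) * Real.log ((m : ℝ) + 1) := by
    linarith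
  have hmain : 2 * ((n : ℝ) * B + Real.log δ⁻¹) ≤ ((n - m : ℕ) : ℝ) * Real.log ((m : ℝ) + 1) := by
    have e3 : 2 * A * (n : ℝ) - (n : ℝ) * γ = 2 * (n : ℝ) * B + (n : ℝ) * γ := by
      rw [e2]; ring
    linarith
  -- convert to the goal
  have hm1pos : (0 : ℝ) < (m : ℝ) + 1 := by positivity
  have hsqrtpos : 0 < Real.sqrt ((m : ℝ) + 1) := Real.sqrt_pos.2 hm1pos
  have hRHSpos : 0 < δ * (5 / 8 : ℝ) ^ n * Real.sqrt ((m : ℝ) + 1) ^ (n - m) := by positivity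
  rw [← Real.log_le_log_iff (by positivity) hRHSpos]
  rw [Real.log_mul (by positivity) (by positivity), Real.log_mul (ne_of_gt hδ) (by positivity)]
  rw [Real.log_pow, Real.log_pow, Real.log_pow]
  rw [Real.log_sqrt hm1pos.le]
  have hlog58 : Real.log ((5 : ℝ) / 8) = Real.log 5 - 3 * Real.log 2 := by
    rw [Real.log_div (by norm_num) (by norm_num)]
    rw [show (8 : ℝ) = 2 ^ (3 : ℕ) from by norm_num, Real.log_pow]
    push_cast; ring
  have hlogδinv : Real.log δ⁻¹ = -Real.log δ := Real.log_inv δ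
  rw [hlog58]
  rw [hlogδinv] at hmain
  rw [hB] at hmain
  push_cast
  nlinarith [hmain]

end Stmt9Aux

/-- fix `0 < ε < 1/100` and `c ≥ 7.36`. For every `δ > 0` there is `N` such
that for all `n ≥ N`, `ε² n < m ≤ n - c n / log₂ n` and `m ≤ p ≤ n - 1`,
`R_m(p,n) ≤ δ (5/8)^n`. -/
theorem stmt9 (ε c : ℝ) (hε0 : 0 < ε) (hε : ε < 1 / 100) (hc : 7.36 ≤ c) :
    ∀ δ : ℝ, 0 < δ → ∃ N : ℕ, ∀ n ≥ N, ∀ m p : ℕ,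
      ε ^ 2 * n < (m : ℝ) → (m : ℝ) ≤ (n : ℝ) - c * n / Real.logb 2 n →
      m ≤ p → p + 1 ≤ n →
      Rm m p n ≤ δ * (5 / 8) ^ n := by
  intro δ hδ
  obtain ⟨N, hN⟩ := Stmt9Aux.final_ineq ε c δ hε0 hε hc hδ
  refine ⟨N, ?_⟩
  intro n hn m p hm1 hm2 hmp hpn
  have hmn : m ≤ n := le_trans hmp (by omega)
  have hfin := hN n hn m hm1 hm2 hmn
  have hrm := Stmt9Aux.rm_le m p n hmp (by omega)
  have hsqrtpos : 0 < Real.sqrt ((m : ℝ) + 1) := Real.sqrt_pos.2 (by positivity)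
  calc Rm m p n ≤ 2 ^ (3 * n) / Real.sqrt ((m : ℝ) + 1) ^ (n - m) := hrm
    _ ≤ δ * (5 / 8) ^ n := by
        rw [div_le_iff₀ (by positivity)]
        exact hfin
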